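/- Let σ > 0, b ≥ 0, γ > 0, D_k > 0, C_k > 0, and t_delay be reals with 0 < t_delay < D_k, and let higher-priority tasks be given, each with period T_i > 0 and execution time C_i > 0. Then the following are equivalent: (i) there exists t with t_delay < t ≤ D_k such that C_k + Σ_i σ·(⌈t/T_i⌉·C_i + b·C_i) ≤ γ·(t − t_delay); (ii) there exists t with 0 < t ≤ D_k such that (C_k + γ·t_delay)/γ + Σ_i (σ/γ)·(⌈t/T_i⌉·C_i + b·C_i) ≤ t. In particular, for any t with 0 < t ≤ t_delay, the inequality (C_k + γ·t_delay)/γ + Σ_i (σ/γ)·(⌈t/T_i⌉·C_i + b·C_i) ≤ t never holds. -/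

import Mathlib

open Finset

theorem bounded_delay_service_curve_reformulation
    {ι : Type*} (σ b γ Dk Ck tdelay : ℝ)
    (hσ : 0 < σ) (hb : 0 ≤ b) (hγ : 0 < γ) (hDk : 0 < Dk) (hCk : 0 < Ck)
    (hd1 : 0 < tdelay) (hd2 : tdelay < Dk)
    (tasks : Finset ι) (T C : ι → ℝ)
    (hT : ∀ i ∈ tasks, 0 < T i)
    (hC : ∀ i ∈ tasks, 0 < C i) :
    ((∃ t : ℝ, tdelay < t ∧ t ≤ Dk ∧
        Ck + ∑ i ∈ tasks, σ * ((⌈t / T i⌉ : ℝ) * C i + b * C i) ≤ γ * (t - tdelay)) ↔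
     (∃ t : ℝ, 0 < t ∧ t ≤ Dk ∧
        (Ck + γ * tdelay) / γ
          + ∑ i ∈ tasks, (σ / γ) * ((⌈t / T i⌉ : ℝ) * C i + b * C i) ≤ t)) ∧
    (∀ t : ℝ, 0 < t → t ≤ tdelay →
      ¬((Ck + γ * tdelay) / γ
          + ∑ i ∈ tasks, (σ / γ) * ((⌈t / T i⌉ : ℝ) * C i + b * C i) ≤ t)) := by
  have key : ∀ t : ℝ,
      ((Ck + γ * tdelay) / γ
          + ∑ i ∈ tasks, (σ / γ) * ((⌈t / T i⌉ : ℝ) * C i + b * C i) ≤ t) ↔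
      (Ck + ∑ i ∈ tasks, σ * ((⌈t / T i⌉ : ℝ) * C i + b * C i) ≤ γ * (t - tdelay)) := by
    intro t
    have hs : ∑ i ∈ tasks, (σ / γ) * ((⌈t / T i⌉ : ℝ) * C i + b * C i)
        = (∑ i ∈ tasks, σ * ((⌈t / T i⌉ : ℝ) * C i + b * C i)) / γ := by
      rw [Finset.sum_div]
      exact Finset.sum_congr rfl (fun i _ => by ring)
    rw [hs, ← add_div, div_le_iff₀ hγ]
    constructor <;> intro h <;> nlinarith
  have pos : ∀ t : ℝ, 0 < t →
      0 ≤ ∑ i ∈ tasks, σ * ((⌈t / T i⌉ : ℝ) * C i + b * C i) := by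
    intro t ht
    apply Finset.sum_nonneg
    intro i hi
    have hTi := hT i hi
    have hCi := hC i hi
    have h1 : (1 : ℝ) ≤ (⌈t / T i⌉ : ℝ) := by
      have : 0 < t / T i := div_pos ht hTi
      exact_mod_cast Int.one_le_ceil_iff.mpr (by exact_mod_cast this)
    nlinarith [mul_nonneg hb hCi.le, mul_pos hσ hCi]
  have never : ∀ t : ℝ, 0 < t → t ≤ tdelay →
      ¬((Ck + γ * tdelay) / γ
          + ∑ i ∈ tasks, (σ / γ) * ((⌈t / T i⌉ : ℝ) * C i + b * C i) ≤ t) := by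
    intro t ht htd h
    have h2 := (key t).mp h
    have h3 := pos t ht
    nlinarith
  refine ⟨⟨fun ⟨t, h1, h2, h3⟩ => ⟨t, lt_trans hd1 h1, h2, (key t).mpr h3⟩,
    fun ⟨t, h1, h2, h3⟩ => ?_⟩, never⟩
  refine ⟨t, ?_, h2, (key t).mp h3⟩
  by_contra hle
  push_neg at hle
  exact never t h1 hle h3
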